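/- Let κ be a field, let p : Fin n → ℝ≥0 and q : Fin m → ℝ≥0 be degree vectors, let A be a (q,p)-admissible m×n matrix over κ[ℝ₊], and let φ : (Fin n → κ[ℝ₊]) → (Fin m → κ[ℝ₊]) be the κ[ℝ₊]-linear map given by multiplication by A (i.e. A.mulVecLin). Then the kernel of φ is a free and finitely generated κ[ℝ₊]-module. -/

import Mathlib

open scoped NNReal

noncomputable section

/-- The ring `κ[ℝ₊]` of polynomials with coefficients in `κ` and exponents in `ℝ≥0`,
realized as the monoid algebra of the additive monoid `ℝ≥0` over `κ`. -/
abbrev PersRing (κ : Type) [Field κ] : Type := AddMonoidAlgebra κ ℝ≥0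

/-- An `m × n` matrix over `κ[ℝ₊]` is `(q, p)`-admissible if every entry `A i j` is either `0`
or a nonzero scalar multiple of the monomial `T ^ (p j - q i)` with `q i ≤ p j`.  These are
exactly the matrices of `ℝ₊`-graded homomorphisms between graded free finitely generated
`κ[ℝ₊]`-modules with homogeneous bases of degrees `p` and `q`. -/
def IsAdmissible {κ : Type} [Field κ] {m n : ℕ} (q : Fin m → ℝ≥0) (p : Fin n → ℝ≥0)
    (A : Matrix (Fin m) (Fin n) (PersRing κ)) : Prop :=
  ∀ i j, A i j = 0 ∨ (q i ≤ p j ∧ ∃ c : κ, c ≠ 0 ∧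
    A i j = c • AddMonoidAlgebra.single (p j - q i) (1 : κ))


namespace KerAdmissibleAux

variable {κ : Type} [Field κ]

lemma smul_single_one (a : ℝ≥0) (c : κ) :
    c • AddMonoidAlgebra.single a (1:κ) = AddMonoidAlgebra.single a c := by
  rw [AddMonoidAlgebra.smul_single]; simp

lemma mulVec_apply {m n : ℕ} (A : Matrix (Fin m) (Fin n) (PersRing κ)) (x : Fin n → PersRing κ)
    (i : Fin m) : A.mulVec x i = ∑ j, A i j * x j := by
  simp [Matrix.mulVec, dotProduct]

/-- An entry which is a (possibly zero) scalar multiple of the right monomial satisfies the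
admissibility dichotomy. -/
lemma dichotomy_of_single {d : ℝ≥0} {a b : ℝ≥0} (h : a ≤ b) (e : κ) (hd : d = b - a) :
    AddMonoidAlgebra.single d e = 0 ∨ (a ≤ b ∧ ∃ c : κ, c ≠ 0 ∧
      (AddMonoidAlgebra.single d e : PersRing κ) = c • AddMonoidAlgebra.single (b - a) (1 : κ)) := by
  rcases eq_or_ne e 0 with rfl | he
  · left; exact AddMonoidAlgebra.single_zero _
  · right; exact ⟨h, e, he, by rw [smul_single_one, hd]⟩

set_option maxHeartbeats 1000000 in
theorem aux (m : ℕ) : ∀ {n : ℕ} (p : Fin n → ℝ≥0) (q : Fin m → ℝ≥0)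
    (A : Matrix (Fin m) (Fin n) (PersRing κ)) (_ : IsAdmissible q p A),
    Module.Free (PersRing κ) (LinearMap.ker A.mulVecLin) ∧
      Module.Finite (PersRing κ) (LinearMap.ker A.mulVecLin) := by
  induction m with
  | zero =>
    intro n p q A _
    have h0 : A.mulVecLin = 0 := Subsingleton.elim _ _
    have hker : LinearMap.ker A.mulVecLin = ⊤ := by rw [h0]; exact LinearMap.ker_zero
    rw [hker]
    exact ⟨Module.Free.of_equiv (Submodule.topEquiv).symm,
      Module.Finite.equiv (Submodule.topEquiv).symm⟩
  | succ m IH =>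
    intro n p q A hA
    classical
    set i0 : Fin (m+1) := Fin.last m with hi0
    by_cases hrow : ∀ j, A i0 j = 0
    · -- last row is zero: delete it, kernel unchanged
      set B : Matrix (Fin m) (Fin n) (PersRing κ) := A.submatrix Fin.castSucc id with hB
      have hBadm : IsAdmissible (q ∘ Fin.castSucc) p B := fun i j => hA _ j
      have hker : LinearMap.ker A.mulVecLin = LinearMap.ker B.mulVecLin := by
        ext x
        simp only [LinearMap.mem_ker, Matrix.mulVecLin_apply]
        constructor
        · intro h
          funext i
          have := congrFun h (Fin.castSucc i)
          simpa [hB, mulVec_apply] using this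
        · intro h
          funext i
          refine Fin.lastCases ?_ ?_ i
          · simp [mulVec_apply, show ∀ j, A (Fin.last m) j = 0 from hrow]
          · intro i
            have := congrFun h i
            simpa [hB, mulVec_apply] using this
      rw [hker]
      exact IH p (q ∘ Fin.castSucc) B hBadm
    · push_neg at hrow
      -- choose pivot column j with minimal degree p j among nonzero entries of the last row
      obtain ⟨j, hjmem, hjmin⟩ := Finset.exists_min_image
        (Finset.univ.filter fun j => A i0 j ≠ 0) p
        (by obtain ⟨j, hj⟩ := hrow; exact ⟨j, by simp [hj]⟩)
      have hj : A i0 j ≠ 0 := by simpa using hjmem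
      have hjmin' : ∀ j', A i0 j' ≠ 0 → p j ≤ p j' := fun j' h =>
        hjmin j' (by simpa using h)
      obtain ⟨hqp0, c, hc, hAj⟩ := (hA i0 j).resolve_left hj
      -- n must be a successor
      obtain ⟨n', rfl⟩ := Nat.exists_eq_succ_of_ne_zero
        (show n ≠ 0 by rintro rfl; exact j.elim0)
      -- column operation multipliers
      have H : ∀ j', ∃ ρ : PersRing κ,
          (j' ≠ j → ρ * A i0 j = A i0 j') ∧ (j' = j → ρ = 0) ∧
          (ρ = 0 ∨ ∃ s : κ, ρ = AddMonoidAlgebra.single (p j' - p j) s ∧ p j ≤ p j') := by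
        intro j'
        rcases eq_or_ne j' j with rfl | hne
        · exact ⟨0, fun h => absurd rfl h, fun _ => rfl, Or.inl rfl⟩
        rcases (hA i0 j') with h0 | ⟨hqp', c', hc', hAj'⟩
        · exact ⟨0, fun _ => by rw [zero_mul, h0], fun h => absurd h hne, Or.inl rfl⟩
        · have hple : p j ≤ p j' := hjmin' j' (by rw [hAj']; simp [smul_single_one,
            Finsupp.single_eq_zero, hc'])
          refine ⟨AddMonoidAlgebra.single (p j' - p j) (c'/c), fun _ => ?_, fun h => absurd h hne,
            Or.inr ⟨c'/c, rfl, hple⟩⟩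
          rw [hAj, hAj', smul_single_one, smul_single_one,
            AddMonoidAlgebra.single_mul_single, tsub_add_tsub_cancel hple hqp0,
            div_mul_cancel₀ _ hc]
      choose r hr1 hr2 hr3 using H
      -- the column-reduced matrix
      set B : Matrix (Fin (m+1)) (Fin (n'+1)) (PersRing κ) :=
        Matrix.of fun i j' => A i j' - r j' * A i j with hBdef
      have hBj : ∀ i, B i j = A i j := by intro i; simp [hBdef, hr2 j rfl]
      have hBlast : ∀ j', j' ≠ j → B i0 j' = 0 := by
        intro j' hne; simp [hBdef, hr1 j' hne]
      have hBadm : IsAdmissible q p B := by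
        intro i j'
        rcases hr3 j' with h0 | ⟨s, hsdef, hple⟩
        · simpa [hBdef, h0] using hA i j'
        rcases (hA i j) with h0 | ⟨hqpi, a, ha, hAij⟩
        · simpa [hBdef, h0] using hA i j'
        have hterm : r j' * A i j = AddMonoidAlgebra.single (p j' - q i) (s * a) := by
          rw [hsdef, hAij, smul_single_one, AddMonoidAlgebra.single_mul_single,
            tsub_add_tsub_cancel hple hqpi]
        have hqpi' : q i ≤ p j' := le_trans hqpi hple
        rcases (hA i j') with h0' | ⟨_, a', ha', hAij'⟩
        · have : B i j' = AddMonoidAlgebra.single (p j' - q i) (-(s*a)) := by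
            simp [hBdef, h0', hterm, Finsupp.single_neg]
          rw [this]; exact dichotomy_of_single hqpi' _ rfl
        · have : B i j' = AddMonoidAlgebra.single (p j' - q i) (a' - s*a) := by
            rw [hBdef]; simp only [Matrix.of_apply]
            rw [hAij', smul_single_one, hterm, ← AddMonoidAlgebra.single_sub]
          rw [this]; exact dichotomy_of_single hqpi' _ rfl
      -- the automorphism realizing the column operations
      set t : (Fin (n'+1) → PersRing κ) →ₗ[PersRing κ] PersRing κ :=
        ∑ j' : Fin (n'+1), r j' • LinearMap.proj j' with htdef
      have ht_apply : ∀ x, t x = ∑ j', r j' * x j' := by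
        intro x; simp [htdef, LinearMap.sum_apply, smul_eq_mul]
      have htδ : t (Pi.single j 1) = 0 := by
        rw [ht_apply]
        rw [Finset.sum_eq_single j]
        · simp [hr2 j rfl]
        · intro b _ hb; simp [Pi.single_eq_of_ne hb]
        · simp
      set u : (Fin (n'+1) → PersRing κ) →ₗ[PersRing κ] (Fin (n'+1) → PersRing κ) :=
        t.smulRight (Pi.single j 1) with hudef
      set v : (Fin (n'+1) → PersRing κ) →ₗ[PersRing κ] (Fin (n'+1) → PersRing κ) :=
        LinearMap.id - u with hvdef
      set w : (Fin (n'+1) → PersRing κ) →ₗ[PersRing κ] (Fin (n'+1) → PersRing κ) :=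
        LinearMap.id + u with hwdef
      have hδ : (Pi.single j (1 : PersRing κ) : Fin (n'+1) → PersRing κ)
          = Pi.single j 1 := rfl
      have hθinv : ∀ (x : Fin (n'+1) → PersRing κ), v (w x) = x ∧ w (v x) = x := by
        intro x
        have h1 : ∀ (y : Fin (n'+1) → PersRing κ) (c : PersRing κ),
            t (y + c • (Pi.single j 1 : Fin (n'+1) → PersRing κ)) = t y := by
          intro y c; rw [map_add, map_smul, htδ, smul_zero, add_zero]
        have h2 : ∀ (y : Fin (n'+1) → PersRing κ) (c : PersRing κ),
            t (y - c • (Pi.single j 1 : Fin (n'+1) → PersRing κ)) = t y := by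
          intro y c; rw [map_sub, map_smul, htδ, smul_zero, sub_zero]
        constructor
        · simp only [hvdef, hwdef, LinearMap.sub_apply, LinearMap.add_apply,
            LinearMap.id_apply, hudef, LinearMap.smulRight_apply]
          rw [h1]; abel
        · simp only [hvdef, hwdef, LinearMap.sub_apply, LinearMap.add_apply,
            LinearMap.id_apply, hudef, LinearMap.smulRight_apply]
          rw [h2]; abel
      set θ : (Fin (n'+1) → PersRing κ) ≃ₗ[PersRing κ] (Fin (n'+1) → PersRing κ) :=
        LinearEquiv.ofLinear v w
          (LinearMap.ext fun x => (hθinv x).1) (LinearMap.ext fun x => (hθinv x).2) with hθdef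
      have hBA : B.mulVecLin = A.mulVecLin.comp θ.toLinearMap := by
        apply LinearMap.ext; intro x
        funext i
        have hθx : θ.toLinearMap x
            = x - t x • (Pi.single j 1 : Fin (n'+1) → PersRing κ) := by
          show v x = _
          simp only [hvdef, LinearMap.sub_apply, LinearMap.id_apply, hudef,
            LinearMap.smulRight_apply]
        simp only [Matrix.mulVecLin_apply, LinearMap.comp_apply]
        rw [hθx, mulVec_apply, mulVec_apply]
        have step : ∀ j', A i j' * (x - t x • (Pi.single j 1 : Fin (n'+1) → PersRing κ)) j'
            = A i j' * x j' - t x * (A i j' * (Pi.single j 1 : Fin (n'+1) → PersRing κ) j') := by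
          intro j'
          rw [Pi.sub_apply, Pi.smul_apply, smul_eq_mul, mul_sub, mul_left_comm]
        rw [Finset.sum_congr rfl fun j' _ => step j']
        rw [Finset.sum_sub_distrib, ← Finset.mul_sum]
        have hsingle : ∑ j', A i j' * (Pi.single j 1 : Fin (n'+1) → PersRing κ) j' = A i j := by
          rw [Finset.sum_eq_single j]
          · simp
          · intro b _ hb; simp [Pi.single_eq_of_ne hb]
          · simp
        rw [hsingle, ht_apply]
        have step2 : ∀ j', B i j' * x j' = A i j' * x j' - r j' * A i j * x j' := by
          intro j'
          show (A i j' - r j' * A i j) * x j' = _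
          rw [sub_mul]
        rw [Finset.sum_congr rfl fun j' _ => step2 j', Finset.sum_sub_distrib]
        congr 1
        rw [Finset.sum_mul]
        exact Finset.sum_congr rfl fun j' _ => by rw [mul_right_comm]
      -- kernel of B is isomorphic to kernel of A
      have hkerBA : LinearMap.ker B.mulVecLin = Submodule.comap
          θ.toLinearMap (LinearMap.ker A.mulVecLin) := by
        rw [hBA, LinearMap.ker_comp]
      -- the reduced matrix E
      set E : Matrix (Fin m) (Fin n') (PersRing κ) :=
        Matrix.of fun i k => B (Fin.castSucc i) (j.succAbove k) with hEdef
      have hEadm : IsAdmissible (q ∘ Fin.castSucc) (p ∘ j.succAbove) E :=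
        fun i k => hBadm (Fin.castSucc i) (j.succAbove k)
      -- membership characterization for ker B
      have hBj0 : B i0 j ≠ 0 := by rw [hBj]; exact hj
      have hmem : ∀ x, x ∈ LinearMap.ker B.mulVecLin ↔
          (x j = 0 ∧ E.mulVec (x ∘ j.succAbove) = 0) := by
        intro x
        simp only [LinearMap.mem_ker, Matrix.mulVecLin_apply]
        constructor
        · intro h
          have hlast := congrFun h i0
          rw [mulVec_apply, Fin.sum_univ_succAbove _ j] at hlast
          have hz : ∀ k : Fin n', B i0 (j.succAbove k) * x (j.succAbove k) = 0 := by
            intro k; rw [hBlast _ (j.succAbove_ne k), zero_mul]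
          rw [Finset.sum_congr rfl fun k _ => hz k, Finset.sum_const_zero, add_zero] at hlast
          have hxj : x j = 0 := by
            rcases mul_eq_zero.1 hlast with h' | h'
            · exact absurd h' hBj0
            · exact h'
          refine ⟨hxj, ?_⟩
          funext i
          have hi := congrFun h (Fin.castSucc i)
          rw [mulVec_apply, Fin.sum_univ_succAbove _ j, hxj, mul_zero, zero_add] at hi
          rw [mulVec_apply]
          simpa [hEdef] using hi
        · rintro ⟨hxj, hE⟩
          funext i
          refine Fin.lastCases ?_ ?_ i
          · rw [mulVec_apply, Fin.sum_univ_succAbove _ j, hxj, mul_zero, zero_add]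
            have hz : ∀ k : Fin n', B i0 (j.succAbove k) * x (j.succAbove k) = 0 := by
              intro k; rw [hBlast _ (j.succAbove_ne k), zero_mul]
            rw [Finset.sum_congr rfl fun k _ => hz k, Finset.sum_const_zero]; rfl
          · intro i
            have hi := congrFun hE i
            rw [mulVec_apply] at hi
            rw [mulVec_apply, Fin.sum_univ_succAbove _ j, hxj, mul_zero, zero_add]
            simpa [hEdef] using hi
      -- linear equivalence ker E ≃ ker B
      have hmemE : ∀ (y : Fin n' → PersRing κ), y ∈ LinearMap.ker E.mulVecLin ↔
          E.mulVec y = 0 := fun y => by simp [LinearMap.mem_ker]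
      set ins : (Fin n' → PersRing κ) → (Fin (n'+1) → PersRing κ) :=
        fun y => Fin.insertNth (α := fun _ => PersRing κ) j 0 y with hins
      have ins_same : ∀ y : Fin n' → PersRing κ, ins y j = 0 :=
        fun y => Fin.insertNth_apply_same (α := fun _ => PersRing κ) j 0 y
      have ins_above : ∀ (y : Fin n' → PersRing κ) (k : Fin n'), ins y (j.succAbove k) = y k :=
        fun y k => Fin.insertNth_apply_succAbove (α := fun _ => PersRing κ) j 0 y k
      set Φ : LinearMap.ker E.mulVecLin ≃ₗ[PersRing κ] LinearMap.ker B.mulVecLin :=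
        { toFun := fun y => ⟨ins y.1, by
            rw [hmem]
            refine ⟨ins_same y.1, ?_⟩
            have : (ins y.1) ∘ j.succAbove = y.1 := by
              funext k; exact ins_above y.1 k
            rw [this]
            exact (hmemE y.1).1 y.2⟩
          map_add' := fun y z => by
            apply Subtype.ext
            show ins (y.1 + z.1) = ins y.1 + ins z.1
            funext j'
            refine Fin.succAboveCases j ?_ ?_ j'
            · simp only [hins, Pi.add_apply,
                Fin.insertNth_apply_same (α := fun _ => PersRing κ) j 0, add_zero]
            · intro k
              simp only [hins, Pi.add_apply,
                Fin.insertNth_apply_succAbove (α := fun _ => PersRing κ) j 0]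
          map_smul' := fun c y => by
            apply Subtype.ext
            show ins (c • y.1) = c • ins y.1
            funext j'
            refine Fin.succAboveCases j ?_ ?_ j'
            · rw [Pi.smul_apply, ins_same, ins_same, smul_zero]
            · intro k
              rw [Pi.smul_apply, ins_above, ins_above, Pi.smul_apply]
          invFun := fun x => ⟨x.1 ∘ j.succAbove, (hmemE _).2 ((hmem x.1).1 x.2).2⟩
          left_inv := fun y => by
            apply Subtype.ext
            show ins y.1 ∘ j.succAbove = y.1
            funext k
            exact ins_above y.1 k
          right_inv := fun x => by
            apply Subtype.ext
            show ins (x.1 ∘ j.succAbove) = x.1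
            funext j'
            refine Fin.succAboveCases j ?_ ?_ j'
            · rw [ins_same]
              exact (((hmem x.1).1 x.2).1).symm
            · intro k; rw [ins_above]; rfl } with hΦ
      -- conclude
      obtain ⟨hEfree, hEfin⟩ := IH (p ∘ j.succAbove) (q ∘ Fin.castSucc) E hEadm
      have hBfree : Module.Free (PersRing κ) (LinearMap.ker B.mulVecLin) :=
        Module.Free.of_equiv Φ
      have hBfin : Module.Finite (PersRing κ) (LinearMap.ker B.mulVecLin) :=
        Module.Finite.equiv Φ
      -- transfer along θ
      have Ψ : LinearMap.ker B.mulVecLin ≃ₗ[PersRing κ] LinearMap.ker A.mulVecLin := by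
        rw [hkerBA]
        exact LinearEquiv.ofSubmodule' θ (LinearMap.ker A.mulVecLin)
      exact ⟨Module.Free.of_equiv Ψ, Module.Finite.equiv Ψ⟩

end KerAdmissibleAux

/-- **Lemma 2.5, 'in particular' part (kernel).**  The kernel of the `κ[ℝ₊]`-linear map
given by multiplication by a `(q, p)`-admissible matrix is a free and finitely generated
`κ[ℝ₊]`-module.  Note that `κ[ℝ₊]` is not a principal ideal domain, so this is not
automatic. -/
theorem ker_admissible_mulVecLin_free_and_finite (κ : Type) [Field κ] {m n : ℕ}
    (p : Fin n → ℝ≥0) (q : Fin m → ℝ≥0)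
    (A : Matrix (Fin m) (Fin n) (PersRing κ)) (hA : IsAdmissible q p A) :
    Module.Free (PersRing κ) (LinearMap.ker A.mulVecLin) ∧
      Module.Finite (PersRing κ) (LinearMap.ker A.mulVecLin) := by
  exact KerAdmissibleAux.aux m p q A hA

end
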